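/- Correctness of the SOCOP prediction-set algorithm: under the hull hypotheses, for every real q ≥ 0 the following holds. If q < η_1 then no i ∈ {1,…,K} satisfies r(i) ≤ q. Otherwise, letting j* = max{ j ∈ {1,…,m} : η_j ≤ q }, one has { i ∈ {1,…,K} : r(i) ≤ q } = {1, 2, …, v_{j*}}. -/
import Mathlib


open Finset

noncomputable def Gam (γ : ℕ → ℝ) (k : ℕ) : ℝ := ∑ i ∈ Finset.Icc 1 k, γ i

noncomputable def gfun (lam : ℝ) (k : ℕ) : ℝ := (if 1 < k then 1 else 0) + lam * (k : ℝ)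

noncomputable def Psi (γ : ℕ → ℝ) (lam η : ℝ) (k : ℕ) : ℝ := gfun lam k - η * Gam γ k

noncomputable def kappa (γ : ℕ → ℝ) (lam : ℝ) (K : ℕ) (η : ℝ) : ℕ :=
  sInf {k : ℕ | k ≤ K ∧ ∀ j ≤ K, Psi γ lam η k ≤ Psi γ lam η j}

noncomputable def score (γ : ℕ → ℝ) (lam : ℝ) (K : ℕ) (i : ℕ) : ℝ :=
  sInf {η : ℝ | 0 ≤ η ∧ i ≤ kappa γ lam K η}

noncomputable def ell (γ : ℕ → ℝ) (lam η : ℝ) (S : Finset ℕ) : ℝ :=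
  (if 1 < S.card then 1 else 0) + lam * (S.card : ℝ) - η * ∑ i ∈ S, γ i

noncomputable def etaSlope (γ : ℕ → ℝ) (lam : ℝ) (v : ℕ → ℕ) (i : ℕ) : ℝ :=
  (gfun lam (v i) - gfun lam (v (i - 1))) / (Gam γ (v i) - Gam γ (v (i - 1)))

section Aux

variable {γ : ℕ → ℝ} {lam : ℝ} {K : ℕ} {v : ℕ → ℕ} {m : ℕ}

lemma Gam_lt_Gam (hpos : ∀ k, 1 ≤ k → k ≤ K → 0 < γ k) {a b : ℕ}
    (hab : a < b) (hbK : b ≤ K) : Gam γ a < Gam γ b := by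
  unfold Gam
  apply Finset.sum_lt_sum_of_subset (Finset.Icc_subset_Icc_right (le_of_lt hab))
      (i := b) (by simp; omega) (by simp; omega) (hpos b (by omega) hbK)
  intro j hj hj'
  simp only [Finset.mem_Icc] at hj
  exact le_of_lt (hpos j hj.1 (le_trans hj.2 hbK))

lemma v_lt_v (hvmono : ∀ i, i < m → v i < v (i + 1)) :
    ∀ a b, a < b → b ≤ m → v a < v b := by
  intro a b hab hbm
  induction b with
  | zero => omega
  | succ n ih =>
    rcases Nat.lt_succ_iff_lt_or_eq.mp hab with h | h
    · exact lt_trans (ih h (by omega)) (hvmono n (by omega))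
    · subst h; exact hvmono a (by omega)

lemma v_le_v (hvmono : ∀ i, i < m → v i < v (i + 1)) :
    ∀ a b, a ≤ b → b ≤ m → v a ≤ v b := by
  intro a b hab hbm
  rcases eq_or_lt_of_le hab with rfl | h
  · exact le_rfl
  · exact le_of_lt (v_lt_v hvmono a b h hbm)

lemma eta_le_eta (hetamono : ∀ i, 1 ≤ i → i < m → etaSlope γ lam v i < etaSlope γ lam v (i + 1)) :
    ∀ a b, 1 ≤ a → a ≤ b → b ≤ m → etaSlope γ lam v a ≤ etaSlope γ lam v b := by
  intro a b ha hab hbm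
  induction b with
  | zero => omega
  | succ n ih =>
    rcases Nat.lt_succ_iff_lt_or_eq.mp (Nat.lt_succ_of_le hab) with h | h
    · rcases Nat.lt_or_ge a n with h' | h'
      · exact le_trans (ih (by omega) (by omega)) (le_of_lt (hetamono n (by omega) (by omega)))
      · have : a = n := by omega
        subst this
        exact le_of_lt (hetamono a ha (by omega))
    · subst h; exact le_rfl

/-- The key identity g(v j) - g(v (j-1)) = η_j (Γ(v j) - Γ(v (j-1))). -/
lemma gfun_gap (hpos : ∀ k, 1 ≤ k → k ≤ K → 0 < γ k)
    (hvmono : ∀ i, i < m → v i < v (i + 1)) (hvK : ∀ j, j ≤ m → v j ≤ K)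
    {j : ℕ} (hj1 : 1 ≤ j) (hjm : j ≤ m) :
    gfun lam (v j) - gfun lam (v (j - 1)) =
      etaSlope γ lam v j * (Gam γ (v j) - Gam γ (v (j - 1))) := by
  have h := Gam_lt_Gam hpos (v_lt_v hvmono (j - 1) j (by omega) hjm) (hvK j hjm)
  unfold etaSlope
  rw [div_mul_cancel₀ _ (sub_pos.mpr h).ne']

/-- Psi step along hull vertices. -/
lemma psi_step (hpos : ∀ k, 1 ≤ k → k ≤ K → 0 < γ k)
    (hvmono : ∀ i, i < m → v i < v (i + 1)) (hvK : ∀ j, j ≤ m → v j ≤ K)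
    (η : ℝ) {j : ℕ} (hj1 : 1 ≤ j) (hjm : j ≤ m) :
    Psi γ lam η (v j) = Psi γ lam η (v (j - 1)) +
      (etaSlope γ lam v j - η) * (Gam γ (v j) - Gam γ (v (j - 1))) := by
  have h := gfun_gap (lam := lam) hpos hvmono hvK hj1 hjm
  unfold Psi
  linear_combination h

/-- If η_l < η for all 1 ≤ l ≤ j, then Psi(v j) ≤ Psi(v i) for i ≤ j. -/
lemma psi_le_left (hpos : ∀ k, 1 ≤ k → k ≤ K → 0 < γ k)
    (hvmono : ∀ i, i < m → v i < v (i + 1)) (hvK : ∀ j, j ≤ m → v j ≤ K)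
    (η : ℝ) {j : ℕ} (hjm : j ≤ m)
    (H1 : ∀ l, 1 ≤ l → l ≤ j → etaSlope γ lam v l < η) :
    ∀ i, i ≤ j → Psi γ lam η (v j) ≤ Psi γ lam η (v i) := by
  intro i hij
  have aux : ∀ b, i ≤ b → b ≤ j → Psi γ lam η (v b) ≤ Psi γ lam η (v i) := by
    intro b hb hbj
    induction b with
    | zero => have : i = 0 := by omega
              subst this; exact le_rfl
    | succ n ih =>
      rcases Nat.lt_succ_iff_lt_or_eq.mp (Nat.lt_succ_of_le hb) with h | h
      · have hstep := psi_step (lam := lam) hpos hvmono hvK η (j := n + 1) (by omega) (by omega)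
        simp only [Nat.add_sub_cancel] at hstep
        have hη : etaSlope γ lam v (n + 1) < η := H1 (n + 1) (by omega) hbj
        have hΓ : Gam γ (v n) < Gam γ (v (n + 1)) :=
          Gam_lt_Gam hpos (hvmono n (by omega)) (hvK (n + 1) (by omega))
        have hneg : (etaSlope γ lam v (n + 1) - η) * (Gam γ (v (n + 1)) - Gam γ (v n)) < 0 :=
          mul_neg_of_neg_of_pos (by linarith) (by linarith)
        have := ih (by omega) (by omega)
        linarith
      · subst h; exact le_rfl
  exact aux j hij le_rfl

/-- If η_l < η for all 1 ≤ l ≤ j, then Psi(v j) < Psi(k) for every k < v j. -/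
lemma psi_lt_below (hpos : ∀ k, 1 ≤ k → k ≤ K → 0 < γ k) (hv0 : v 0 = 0)
    (hvmono : ∀ i, i < m → v i < v (i + 1)) (hvK : ∀ j, j ≤ m → v j ≤ K)
    (hhull : ∀ i, 1 ≤ i → i ≤ m → ∀ k, v (i - 1) < k → k < v i →
      gfun lam (v (i - 1)) + etaSlope γ lam v i * (Gam γ k - Gam γ (v (i - 1))) < gfun lam k)
    (η : ℝ) {j : ℕ} (hjm : j ≤ m)
    (H1 : ∀ l, 1 ≤ l → l ≤ j → etaSlope γ lam v l < η) :
    ∀ k, k < v j → Psi γ lam η (v j) < Psi γ lam η k := by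
  have aux : ∀ i, i ≤ j → ∀ k, k < v i → Psi γ lam η (v j) < Psi γ lam η k := by
    intro i
    induction i with
    | zero => intro _ k hk; rw [hv0] at hk; omega
    | succ n ih =>
      intro hnj k hk
      by_cases hkn : k < v n
      · exact ih (by omega) k hkn
      · have hC : Psi γ lam η (v j) ≤ Psi γ lam η (v (n + 1)) :=
          psi_le_left hpos hvmono hvK η hjm H1 (n + 1) hnj
        have hΓ : Gam γ (v n) < Gam γ (v (n + 1)) :=
          Gam_lt_Gam hpos (hvmono n (by omega)) (hvK (n + 1) (by omega))
        have hη : etaSlope γ lam v (n + 1) < η := H1 (n + 1) (by omega) hnj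
        have hstep := psi_step (lam := lam) hpos hvmono hvK η (j := n + 1) (by omega) (by omega)
        simp only [Nat.add_sub_cancel] at hstep
        rcases eq_or_lt_of_le (not_lt.mp hkn) with he | hlt
        · -- k = v n
          rw [← he]
          have hneg : (etaSlope γ lam v (n + 1) - η) * (Gam γ (v (n + 1)) - Gam γ (v n)) < 0 :=
            mul_neg_of_neg_of_pos (by linarith) (by linarith)
          linarith
        · -- v n < k < v (n+1)
          have hh := hhull (n + 1) (by omega) (by omega) k (by simpa using hlt) hk
          simp only [Nat.add_sub_cancel] at hh
          have hΓ1 : Gam γ k < Gam γ (v (n + 1)) :=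
            Gam_lt_Gam hpos hk (hvK (n + 1) (by omega))
          have hΓ2 : Gam γ (v n) < Gam γ k :=
            Gam_lt_Gam hpos hlt (le_trans (le_of_lt hk) (hvK (n + 1) (by omega)))
          have hprod : 0 < (η - etaSlope γ lam v (n + 1)) * (Gam γ (v (n + 1)) - Gam γ k) :=
            mul_pos (by linarith) (by linarith)
          unfold Psi at hC hstep ⊢
          nlinarith
  exact aux j le_rfl

/-- If η ≤ η_l for all j < l ≤ m, then Psi(v j) ≤ Psi(k) for all v j ≤ k ≤ K. -/
lemma psi_le_above (hpos : ∀ k, 1 ≤ k → k ≤ K → 0 < γ k) (hvm : v m = K)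
    (hvmono : ∀ i, i < m → v i < v (i + 1)) (hvK : ∀ j, j ≤ m → v j ≤ K)
    (hhull : ∀ i, 1 ≤ i → i ≤ m → ∀ k, v (i - 1) < k → k < v i →
      gfun lam (v (i - 1)) + etaSlope γ lam v i * (Gam γ k - Gam γ (v (i - 1))) < gfun lam k)
    (η : ℝ) {j : ℕ} (hjm : j ≤ m)
    (H2 : ∀ l, j < l → l ≤ m → η ≤ etaSlope γ lam v l) :
    ∀ k, v j ≤ k → k ≤ K → Psi γ lam η (v j) ≤ Psi γ lam η k := by
  have aux : ∀ i, j ≤ i → i ≤ m → ∀ k, v j ≤ k → k ≤ v i → Psi γ lam η (v j) ≤ Psi γ lam η k := by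
    intro i hji
    induction i, hji using Nat.le_induction with
    | base =>
      intro _ k h1 h2
      have : k = v j := le_antisymm h2 h1
      rw [this]
    | succ n hjn ih =>
      intro hnm k hk1 hk2
      by_cases hkn : k ≤ v n
      · exact ih (by omega) k hk1 hkn
      · push_neg at hkn
        have hle : Psi γ lam η (v j) ≤ Psi γ lam η (v n) :=
          ih (by omega) (v n) (v_le_v hvmono j n hjn (by omega)) le_rfl
        have hΓ : Gam γ (v n) < Gam γ (v (n + 1)) :=
          Gam_lt_Gam hpos (hvmono n (by omega)) (hvK (n + 1) hnm)
        have hη : η ≤ etaSlope γ lam v (n + 1) := H2 (n + 1) (by omega) hnm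
        have hstep := psi_step (lam := lam) hpos hvmono hvK η (j := n + 1) (by omega) hnm
        simp only [Nat.add_sub_cancel] at hstep
        rcases eq_or_lt_of_le hk2 with he | hlt
        · rw [he]
          have hnn : 0 ≤ (etaSlope γ lam v (n + 1) - η) * (Gam γ (v (n + 1)) - Gam γ (v n)) :=
            mul_nonneg (by linarith) (by linarith)
          linarith
        · have hh := hhull (n + 1) (by omega) hnm k (by simpa using hkn) hlt
          simp only [Nat.add_sub_cancel] at hh
          have hΓ2 : Gam γ (v n) < Gam γ k :=
            Gam_lt_Gam hpos hkn (le_trans (le_of_lt hlt) (hvK (n + 1) hnm))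
          have hprod : 0 ≤ (etaSlope γ lam v (n + 1) - η) * (Gam γ k - Gam γ (v n)) :=
            mul_nonneg (by linarith) (by linarith)
          unfold Psi at hle ⊢
          nlinarith
  intro k hk1 hk2
  exact aux m hjm le_rfl k hk1 (by rw [hvm]; exact hk2)

/-- Characterization of kappa. -/
lemma kappa_eq (hpos : ∀ k, 1 ≤ k → k ≤ K → 0 < γ k) (hv0 : v 0 = 0) (hvm : v m = K)
    (hvmono : ∀ i, i < m → v i < v (i + 1)) (hvK : ∀ j, j ≤ m → v j ≤ K)
    (hhull : ∀ i, 1 ≤ i → i ≤ m → ∀ k, v (i - 1) < k → k < v i →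
      gfun lam (v (i - 1)) + etaSlope γ lam v i * (Gam γ k - Gam γ (v (i - 1))) < gfun lam k)
    (η : ℝ) {j : ℕ} (hjm : j ≤ m)
    (H1 : ∀ l, 1 ≤ l → l ≤ j → etaSlope γ lam v l < η)
    (H2 : ∀ l, j < l → l ≤ m → η ≤ etaSlope γ lam v l) :
    kappa γ lam K η = v j := by
  set S := {k : ℕ | k ≤ K ∧ ∀ j' ≤ K, Psi γ lam η k ≤ Psi γ lam η j'} with hS
  have hmem : v j ∈ S := by
    refine ⟨hvK j hjm, fun k hkK => ?_⟩
    by_cases h : k < v j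
    · exact le_of_lt (psi_lt_below hpos hv0 hvmono hvK hhull η hjm H1 k h)
    · exact psi_le_above hpos hvm hvmono hvK hhull η hjm H2 k (not_lt.mp h) hkK
  have : kappa γ lam K η = sInf S := rfl
  rw [this]
  apply le_antisymm (Nat.sInf_le hmem)
  have hne : S.Nonempty := ⟨v j, hmem⟩
  have hsm := Nat.sInf_mem hne
  by_contra hlt
  push_neg at hlt
  have h1 := psi_lt_below hpos hv0 hvmono hvK hhull η hjm H1 (sInf S) hlt
  have h2 := hsm.2 (v j) (hvK j hjm)
  linarith

end Aux

section Aux2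

variable {γ : ℕ → ℝ} {lam : ℝ} {K : ℕ} {v : ℕ → ℕ} {m : ℕ}

lemma score_eq (hpos : ∀ k, 1 ≤ k → k ≤ K → 0 < γ k) (hv0 : v 0 = 0) (hvm : v m = K)
    (hvmono : ∀ i, i < m → v i < v (i + 1)) (hvK : ∀ j, j ≤ m → v j ≤ K)
    (hhull : ∀ i, 1 ≤ i → i ≤ m → ∀ k, v (i - 1) < k → k < v i →
      gfun lam (v (i - 1)) + etaSlope γ lam v i * (Gam γ k - Gam γ (v (i - 1))) < gfun lam k)
    (heta1 : 0 < etaSlope γ lam v 1)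
    (hetamono : ∀ i, 1 ≤ i → i < m → etaSlope γ lam v i < etaSlope γ lam v (i + 1))
    {i j : ℕ} (hj1 : 1 ≤ j) (hjm : j ≤ m) (hb1 : v (j - 1) < i) (hb2 : i ≤ v j) :
    score γ lam K i = etaSlope γ lam v j := by
  classical
  have etale := eta_le_eta (γ := γ) (lam := lam) (v := v) (m := m) hetamono
  have hkey : ∀ η : ℝ, i ≤ kappa γ lam K η ↔ etaSlope γ lam v j < η := by
    intro η
    set P : ℕ → Prop := fun l => etaSlope γ lam v l < η with hP
    set J := Nat.findGreatest P m with hJdef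
    have hJm : J ≤ m := Nat.findGreatest_le m
    have hH2 : ∀ l, J < l → l ≤ m → η ≤ etaSlope γ lam v l := fun l hl hlm =>
      not_lt.mp (Nat.findGreatest_is_greatest hl hlm)
    constructor
    · intro hik
      by_contra hq
      push_neg at hq
      have hJj : J < j := by
        by_contra hc
        push_neg at hc
        have hPJ : P J := Nat.findGreatest_of_ne_zero rfl (by omega)
        have h2 : etaSlope γ lam v j ≤ etaSlope γ lam v J := etale j J hj1 hc hJm
        simp only [hP] at hPJ
        linarith
      have hH1 : ∀ l, 1 ≤ l → l ≤ J → etaSlope γ lam v l < η := by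
        intro l hl1 hlJ
        have hPJ : P J := Nat.findGreatest_of_ne_zero rfl (by omega)
        have h2 : etaSlope γ lam v l ≤ etaSlope γ lam v J := etale l J hl1 hlJ hJm
        simp only [hP] at hPJ
        linarith
      have hk := kappa_eq hpos hv0 hvm hvmono hvK hhull η hJm hH1 hH2
      rw [hk] at hik
      have hvv : v J ≤ v (j - 1) := v_le_v hvmono J (j - 1) (by omega) (by omega)
      omega
    · intro hη
      have hJj : j ≤ J := Nat.le_findGreatest hjm hη
      have hH1 : ∀ l, 1 ≤ l → l ≤ J → etaSlope γ lam v l < η := by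
        intro l hl1 hlJ
        have hPJ : P J := Nat.findGreatest_of_ne_zero rfl (by omega)
        have h2 : etaSlope γ lam v l ≤ etaSlope γ lam v J := etale l J hl1 hlJ hJm
        simp only [hP] at hPJ
        linarith
      have hk := kappa_eq hpos hv0 hvm hvmono hvK hhull η hJm hH1 hH2
      rw [hk]
      have hvv : v j ≤ v J := v_le_v hvmono j J hJj hJm
      omega
  have hpos0 : 0 < etaSlope γ lam v j := lt_of_lt_of_le heta1 (etale 1 j le_rfl hj1 hjm)
  have hset : {η : ℝ | 0 ≤ η ∧ i ≤ kappa γ lam K η} = Set.Ioi (etaSlope γ lam v j) := by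
    ext η
    simp only [Set.mem_setOf_eq, Set.mem_Ioi]
    constructor
    · rintro ⟨_, h⟩; exact (hkey η).mp h
    · intro h; exact ⟨by linarith, (hkey η).mpr h⟩
  unfold score
  rw [hset]
  exact csInf_Ioi

end Aux2

/-- Correctness of the SOCOP prediction-set algorithm: under the hull hypotheses, for
q ≥ 0, if q < η₁ then no i ∈ {1,…,K} has r(i) ≤ q; otherwise, with
j* = max{j ∈ {1,…,m} : η_j ≤ q}, one has {i ∈ {1,…,K} : r(i) ≤ q} = {1,…,v_{j*}}. -/
theorem stmt19 (K : ℕ) (hK : 1 ≤ K) (γ : ℕ → ℝ) (lam : ℝ) (hlam : 0 ≤ lam)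
    (hmono : ∀ i j : ℕ, 1 ≤ i → i ≤ j → j ≤ K → γ j ≤ γ i)
    (hposK : 0 < γ K)
    (hsum : ∑ i ∈ Finset.Icc 1 K, γ i = 1)
    (v : ℕ → ℕ) (m : ℕ) (hv0 : v 0 = 0) (hvm : v m = K)
    (hvmono : ∀ i, i < m → v i < v (i + 1))
    (heta1 : 0 < etaSlope γ lam v 1)
    (hetamono : ∀ i, 1 ≤ i → i < m → etaSlope γ lam v i < etaSlope γ lam v (i + 1))
    (hhull : ∀ i, 1 ≤ i → i ≤ m → ∀ k, v (i - 1) < k → k < v i →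
      gfun lam (v (i - 1)) + etaSlope γ lam v i * (Gam γ k - Gam γ (v (i - 1))) < gfun lam k)
    (q : ℝ) (hq : 0 ≤ q) :
    (q < etaSlope γ lam v 1 → ∀ i : ℕ, 1 ≤ i → i ≤ K → ¬ score γ lam K i ≤ q) ∧
    (etaSlope γ lam v 1 ≤ q → ∀ i : ℕ, 1 ≤ i → i ≤ K →
      (score γ lam K i ≤ q ↔
        i ≤ v (sSup {j : ℕ | 1 ≤ j ∧ j ≤ m ∧ etaSlope γ lam v j ≤ q}))) := by
  classical
  have hpos : ∀ k, 1 ≤ k → k ≤ K → 0 < γ k := fun k h1 h2 =>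
    lt_of_lt_of_le hposK (hmono k K h1 h2 le_rfl)
  have hvK : ∀ j, j ≤ m → v j ≤ K := fun j hj => hvm ▸ v_le_v hvmono j m hj le_rfl
  have hm1 : 1 ≤ m := by
    by_contra h
    push_neg at h
    have hm0 : m = 0 := by omega
    rw [hm0, hv0] at hvm
    omega
  have etale := eta_le_eta (γ := γ) (lam := lam) (v := v) (m := m) hetamono
  have bracket : ∀ i : ℕ, 1 ≤ i → i ≤ K → ∃ j, 1 ≤ j ∧ j ≤ m ∧ v (j - 1) < i ∧ i ≤ v j := by
    intro i hi1 hiK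
    have hex : ∃ l, i ≤ v l := ⟨m, by rw [hvm]; exact hiK⟩
    set j := Nat.find hex with hj
    have hspec : i ≤ v j := Nat.find_spec hex
    have hjm : j ≤ m := Nat.find_min' hex (by rw [hvm]; exact hiK)
    have hj1 : 1 ≤ j := by
      rcases Nat.eq_zero_or_pos j with h | h
      · rw [h, hv0] at hspec; omega
      · exact h
    have hb1 : v (j - 1) < i := by
      have := Nat.find_min hex (show j - 1 < j by omega)
      omega
    exact ⟨j, hj1, hjm, hb1, hspec⟩
  constructor
  · intro hq1 i hi1 hiK
    obtain ⟨j, hj1, hjm, hb1, hb2⟩ := bracket i hi1 hiK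
    rw [score_eq hpos hv0 hvm hvmono hvK hhull heta1 hetamono hj1 hjm hb1 hb2]
    have h1 := etale 1 j le_rfl hj1 hjm
    push_neg
    linarith
  · intro hq1 i hi1 hiK
    obtain ⟨j, hj1, hjm, hb1, hb2⟩ := bracket i hi1 hiK
    rw [score_eq hpos hv0 hvm hvmono hvK hhull heta1 hetamono hj1 hjm hb1 hb2]
    set S : Set ℕ := {j | 1 ≤ j ∧ j ≤ m ∧ etaSlope γ lam v j ≤ q} with hSdef
    have hbdd : BddAbove S := ⟨m, fun x hx => hx.2.1⟩
    have hne : S.Nonempty := ⟨1, le_rfl, hm1, hq1⟩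
    obtain ⟨hs1, hsm, hsq⟩ := Nat.sSup_mem hne hbdd
    constructor
    · intro hηj
      have hjs : j ≤ sSup S := le_csSup hbdd ⟨hj1, hjm, hηj⟩
      exact le_trans hb2 (v_le_v hvmono j (sSup S) hjs hsm)
    · intro hi
      have h2 : j ≤ sSup S := by
        by_contra hc
        push_neg at hc
        have hvv : v (sSup S) ≤ v (j - 1) := v_le_v hvmono _ _ (by omega) (by omega)
        omega
      exact le_trans (etale j (sSup S) hj1 h2 hsm) hsq
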